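/- With the setup of the multi-layer residual network x_{k+1} = H_k x_k + G_kΦ(W_k x_k), y_k = W_k x_k, Φ entrywise slope-restricted in [α, β], define m_0 = ‖W_0‖ and recursively m_{k+1} = ‖W_{k+1}Ĥ_k⋯Ĥ_0‖ + ((β−α)/2)·∑_{j=0}^{k} ‖W_{k+1}Ĥ_k⋯Ĥ_{j+1}G_j‖·m_j. Then for each k, the map x_0 ↦ y_k is Lipschitz with constant m_k. -/

import Mathlib

open Matrix

/-- Spectral norm (ℓ₂ operator norm) of a matrix. -/
noncomputable def specNorm {p n : ℕ} (M : Matrix (Fin p) (Fin n) ℝ) : ℝ :=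
  ‖LinearMap.toContinuousLinearMap (Matrix.toEuclideanLin M)‖

/-- View a plain vector as an element of Euclidean space. -/
def eu {n : ℕ} (v : Fin n → ℝ) : EuclideanSpace ℝ (Fin n) := WithLp.toLp 2 v

/-- View an element of Euclidean space as a plain vector. -/
def pl {n : ℕ} (v : EuclideanSpace ℝ (Fin n)) : Fin n → ℝ := v

/-- `prodDown M k c = M k * M (k-1) * ⋯ * M (k-c+1)` (a product of `c` factors). -/
def prodDown {n : ℕ} (M : ℕ → Matrix (Fin n) (Fin n) ℝ) :
    ℕ → ℕ → Matrix (Fin n) (Fin n) ℝ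
  | _, 0 => 1
  | k, c + 1 => M k * prodDown M (k - 1) c

/-- The state sequence of the residual network `x_{k+1} = H_k x_k + G_k Φ(W_k x_k)`. -/
def netState {n : ℕ} (φ : ℝ → ℝ) (H G W : ℕ → Matrix (Fin n) (Fin n) ℝ)
    (x0 : Fin n → ℝ) : ℕ → Fin n → ℝ
  | 0 => x0
  | k + 1 => (H k).mulVec (netState φ H G W x0 k) +
      (G k).mulVec (fun i => φ ((W k).mulVec (netState φ H G W x0 k) i))

/- ----------------- auxiliary lemmas ----------------- -/

lemma specNorm_nonneg' {p n : ℕ} (M : Matrix (Fin p) (Fin n) ℝ) : 0 ≤ specNorm M :=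
  norm_nonneg _

lemma eu_mulVec_le {n : ℕ} (M : Matrix (Fin n) (Fin n) ℝ) (v : Fin n → ℝ) :
    ‖eu (M.mulVec v)‖ ≤ specNorm M * ‖eu v‖ := by
  have h := (LinearMap.toContinuousLinearMap (Matrix.toEuclideanLin M)).le_opNorm (eu v)
  have h2 : LinearMap.toContinuousLinearMap (Matrix.toEuclideanLin M) (eu v)
      = eu (M.mulVec v) := rfl
  rwa [h2] at h

lemma psi_scalar (φ : ℝ → ℝ) (α β : ℝ) (hαβ : α ≤ β)
    (hslope : ∀ a b : ℝ, a ≠ b → α ≤ (φ a - φ b) / (a - b) ∧ (φ a - φ b) / (a - b) ≤ β)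
    (a b : ℝ) :
    |(φ a - (α + β) / 2 * a) - (φ b - (α + β) / 2 * b)| ≤ (β - α) / 2 * |a - b| := by
  rcases eq_or_ne a b with h | h
  · simp [h]
  · obtain ⟨h1, h2⟩ := hslope a b h
    have hab : a - b ≠ 0 := sub_ne_zero.mpr h
    have key : (φ a - (α + β) / 2 * a) - (φ b - (α + β) / 2 * b)
        = ((φ a - φ b) / (a - b) - (α + β) / 2) * (a - b) := by
      field_simp; ring
    rw [key, abs_mul]
    have hs : |(φ a - φ b) / (a - b) - (α + β) / 2| ≤ (β - α) / 2 := by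
      rw [abs_le]; constructor <;> linarith
    exact mul_le_mul_of_nonneg_right hs (abs_nonneg _)

lemma psi_lip {n : ℕ} (φ : ℝ → ℝ) (α β : ℝ) (hαβ : α ≤ β)
    (hslope : ∀ a b : ℝ, a ≠ b → α ≤ (φ a - φ b) / (a - b) ∧ (φ a - φ b) / (a - b) ≤ β)
    (u v : Fin n → ℝ) :
    ‖eu (fun i => (φ (u i) - (α + β) / 2 * u i) - (φ (v i) - (α + β) / 2 * v i))‖
      ≤ (β - α) / 2 * ‖eu (u - v)‖ := by
  have hr : (0:ℝ) ≤ (β - α) / 2 := by linarith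
  rw [EuclideanSpace.norm_eq, EuclideanSpace.norm_eq]
  rw [← Real.sqrt_sq hr, ← Real.sqrt_mul (by positivity)]
  apply Real.sqrt_le_sqrt
  rw [Finset.mul_sum]
  apply Finset.sum_le_sum
  intro i _
  have h3 := psi_scalar φ α β hαβ hslope (u i) (v i)
  show |(φ (u i) - (α + β) / 2 * u i) - (φ (v i) - (α + β) / 2 * v i)|^2
      ≤ ((β - α) / 2)^2 * |(u - v) i|^2
  calc |(φ (u i) - (α + β) / 2 * u i) - (φ (v i) - (α + β) / 2 * v i)|^2
      ≤ ((β - α) / 2 * |u i - v i|)^2 := by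
        exact pow_le_pow_left₀ (abs_nonneg _) h3 2
    _ = ((β - α) / 2)^2 * |(u - v) i|^2 := by
        simp [Pi.sub_apply, mul_pow, sq_abs]

lemma mulVec_finset_sum {n : ℕ} (A : Matrix (Fin n) (Fin n) ℝ) (s : Finset ℕ)
    (f : ℕ → Fin n → ℝ) :
    A.mulVec (∑ j ∈ s, f j) = ∑ j ∈ s, A.mulVec (f j) := by
  exact map_sum A.mulVecLin f s

/-- Theorem 3 (LipLT): the recursively defined constants `m_k` are Lipschitz
constants of the maps `x_0 ↦ y_k = W_k x_k` in the ℓ₂ norm. -/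
theorem liplt_multilayer_lipschitz {n : ℕ} (φ : ℝ → ℝ) (α β : ℝ) (hαβ : α ≤ β)
    (hslope : ∀ a b : ℝ, a ≠ b → α ≤ (φ a - φ b) / (a - b) ∧ (φ a - φ b) / (a - b) ≤ β)
    (H G W : ℕ → Matrix (Fin n) (Fin n) ℝ) (m : ℕ → ℝ)
    (hm0 : m 0 = specNorm (W 0))
    (hm : ∀ k, m (k + 1) =
      specNorm (W (k + 1) * prodDown (fun j => H j + ((α + β) / 2) • (G j * W j)) k (k + 1)) +
      (β - α) / 2 * ∑ j ∈ Finset.range (k + 1),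
        specNorm (W (k + 1) *
            prodDown (fun j => H j + ((α + β) / 2) • (G j * W j)) k (k - j) * G j) * m j) :
    ∀ (k : ℕ) (x0 x0' : EuclideanSpace ℝ (Fin n)),
      ‖eu ((W k).mulVec (netState φ H G W (pl x0) k) -
           (W k).mulVec (netState φ H G W (pl x0') k))‖ ≤ m k * ‖x0 - x0'‖ := by
  intro k
  induction k using Nat.strong_induction_on with
  | _ k ih =>
    intro x0 x0'
    set Hh : ℕ → Matrix (Fin n) (Fin n) ℝ := fun j => H j + ((α + β) / 2) • (G j * W j) with hHh
    set x : ℕ → Fin n → ℝ := netState φ H G W (pl x0) with hx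
    set x' : ℕ → Fin n → ℝ := netState φ H G W (pl x0') with hx'
    -- the "nonlinearity difference" vectors
    set ψd : ℕ → Fin n → ℝ := fun j => fun i =>
      (φ ((W j).mulVec (x j) i) - (α + β) / 2 * (W j).mulVec (x j) i) -
      (φ ((W j).mulVec (x' j) i) - (α + β) / 2 * (W j).mulVec (x' j) i) with hψd
    have hψd_norm : ∀ j, ‖eu (ψd j)‖
        ≤ (β - α) / 2 * ‖eu ((W j).mulVec (x j) - (W j).mulVec (x' j))‖ := by
      intro j
      have := psi_lip φ α β hαβ hslope ((W j).mulVec (x j)) ((W j).mulVec (x' j))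
      exact this
    -- one-step loop-transformed recursion for the difference
    have hstep : ∀ j, x (j + 1) - x' (j + 1)
        = (Hh j).mulVec (x j - x' j) + (G j).mulVec (ψd j) := by
      intro j
      show ((H j).mulVec (x j) + (G j).mulVec (fun i => φ ((W j).mulVec (x j) i))) -
           ((H j).mulVec (x' j) + (G j).mulVec (fun i => φ ((W j).mulVec (x' j) i))) = _
      have e1 : ψd j = (fun i => φ ((W j).mulVec (x j) i)) -
          (fun i => φ ((W j).mulVec (x' j) i)) -
          ((α + β) / 2) • ((W j).mulVec (x j) - (W j).mulVec (x' j)) := by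
        funext i
        simp [hψd, Pi.sub_apply, Pi.smul_apply]
        ring
      rw [e1, hHh]
      simp only [Matrix.mulVec_sub, Matrix.mulVec_smul, Matrix.add_mulVec,
        Matrix.smul_mulVec, ← Matrix.mulVec_mulVec]
      module
    -- unrolled representation of the difference
    have hunroll : ∀ j, x (j + 1) - x' (j + 1)
        = (prodDown Hh j (j + 1)).mulVec (pl x0 - pl x0') +
          ∑ i ∈ Finset.range (j + 1), (prodDown Hh j (j - i) * G i).mulVec (ψd i) := by
      intro j
      induction j with
      | zero =>
        rw [hstep 0]
        have h0 : x 0 - x' 0 = pl x0 - pl x0' := rfl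
        simp [prodDown, h0]
      | succ j ihj =>
        rw [hstep (j + 1), ihj]
        rw [Matrix.mulVec_add, mulVec_finset_sum]
        have hA : (Hh (j + 1)).mulVec ((prodDown Hh j (j + 1)).mulVec (pl x0 - pl x0'))
            = (prodDown Hh (j + 1) (j + 2)).mulVec (pl x0 - pl x0') := by
          rw [Matrix.mulVec_mulVec]
          rfl
        rw [hA, Finset.sum_range_succ (n := j + 1)]
        have hlast : (prodDown Hh (j + 1) ((j + 1) - (j + 1)) * G (j + 1)).mulVec (ψd (j + 1))
            = (G (j + 1)).mulVec (ψd (j + 1)) := by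
          simp [prodDown]
        rw [hlast]
        rw [add_assoc]
        congr 1
        congr 1
        apply Finset.sum_congr rfl
        intro i hi
        have hij : i ≤ j := Nat.lt_succ_iff.mp (Finset.mem_range.mp hi)
        have hsub : (j + 1) - i = (j - i) + 1 := by omega
        rw [Matrix.mulVec_mulVec, hsub]
        have : prodDown Hh (j + 1) ((j - i) + 1) = Hh (j + 1) * prodDown Hh j (j - i) := by
          rfl
        rw [this, mul_assoc]
    -- main case split
    match k with
    | 0 =>
      have h0 : (W 0).mulVec (x 0) - (W 0).mulVec (x' 0)
          = (W 0).mulVec (pl x0 - pl x0') := by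
        rw [Matrix.mulVec_sub]; rfl
      rw [h0, hm0]
      have := eu_mulVec_le (W 0) (pl x0 - pl x0')
      have he : eu (pl x0 - pl x0') = x0 - x0' := rfl
      rwa [he] at this
    | k + 1 =>
      have hr : (0:ℝ) ≤ (β - α) / 2 := by linarith
      have key : (W (k + 1)).mulVec (x (k + 1)) - (W (k + 1)).mulVec (x' (k + 1))
          = (W (k + 1) * prodDown Hh k (k + 1)).mulVec (pl x0 - pl x0') +
            ∑ j ∈ Finset.range (k + 1),
              (W (k + 1) * prodDown Hh k (k - j) * G j).mulVec (ψd j) := by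
        rw [← Matrix.mulVec_sub, hunroll k, Matrix.mulVec_add, mulVec_finset_sum,
          Matrix.mulVec_mulVec]
        congr 1
        apply Finset.sum_congr rfl
        intro j _
        rw [Matrix.mulVec_mulVec, mul_assoc]
      rw [key]
      have hsplit : eu ((W (k + 1) * prodDown Hh k (k + 1)).mulVec (pl x0 - pl x0') +
            ∑ j ∈ Finset.range (k + 1),
              (W (k + 1) * prodDown Hh k (k - j) * G j).mulVec (ψd j))
          = eu ((W (k + 1) * prodDown Hh k (k + 1)).mulVec (pl x0 - pl x0')) +
            ∑ j ∈ Finset.range (k + 1),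
              eu ((W (k + 1) * prodDown Hh k (k - j) * G j).mulVec (ψd j)) := by
        simp only [eu, WithLp.toLp_add, WithLp.toLp_sum]
      rw [hsplit]
      calc ‖eu ((W (k + 1) * prodDown Hh k (k + 1)).mulVec (pl x0 - pl x0')) +
            ∑ j ∈ Finset.range (k + 1),
              eu ((W (k + 1) * prodDown Hh k (k - j) * G j).mulVec (ψd j))‖
          ≤ ‖eu ((W (k + 1) * prodDown Hh k (k + 1)).mulVec (pl x0 - pl x0'))‖ +
            ∑ j ∈ Finset.range (k + 1),
              ‖eu ((W (k + 1) * prodDown Hh k (k - j) * G j).mulVec (ψd j))‖ :=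
            (norm_add_le _ _).trans (add_le_add_right (norm_sum_le _ _) _)
        _ ≤ specNorm (W (k + 1) * prodDown Hh k (k + 1)) * ‖x0 - x0'‖ +
            ∑ j ∈ Finset.range (k + 1),
              specNorm (W (k + 1) * prodDown Hh k (k - j) * G j) *
                ((β - α) / 2 * (m j * ‖x0 - x0'‖)) := by
            apply add_le_add
            · have := eu_mulVec_le (W (k + 1) * prodDown Hh k (k + 1)) (pl x0 - pl x0')
              have he : eu (pl x0 - pl x0') = x0 - x0' := rfl
              rwa [he] at this
            · apply Finset.sum_le_sum
              intro j hj
              have hjk : j < k + 1 := Finset.mem_range.mp hj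
              have b1 := eu_mulVec_le (W (k + 1) * prodDown Hh k (k - j) * G j) (ψd j)
              have b2 := hψd_norm j
              have b3 := ih j hjk x0 x0'
              calc ‖eu ((W (k + 1) * prodDown Hh k (k - j) * G j).mulVec (ψd j))‖
                  ≤ specNorm (W (k + 1) * prodDown Hh k (k - j) * G j) * ‖eu (ψd j)‖ := b1
                _ ≤ specNorm (W (k + 1) * prodDown Hh k (k - j) * G j) *
                    ((β - α) / 2 * (m j * ‖x0 - x0'‖)) := by
                    apply mul_le_mul_of_nonneg_left _ (specNorm_nonneg' _)
                    calc ‖eu (ψd j)‖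
                        ≤ (β - α) / 2 *
                          ‖eu ((W j).mulVec (x j) - (W j).mulVec (x' j))‖ := b2
                      _ ≤ (β - α) / 2 * (m j * ‖x0 - x0'‖) :=
                          mul_le_mul_of_nonneg_left b3 hr
        _ = m (k + 1) * ‖x0 - x0'‖ := by
            rw [hm k, add_mul, Finset.mul_sum, Finset.sum_mul]
            congr 1
            apply Finset.sum_congr rfl
            intro j _
            ring
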